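/- Let x,y,z,w ∈ ℝ² be four distinct points with w ∈ conv({x,y,z}). Let x',y',z',w' ∈ ℝ² satisfy ‖x'−z'‖ = ‖x−z‖, ‖z'−y'‖ = ‖z−y‖, ‖x'−w'‖ = ‖x−w‖, ‖w'−y'‖ = ‖w−y‖. If ‖z'−w'‖ ≤ ‖z−w‖, then ‖x'−y'‖ ≤ ‖x−y‖. -/

import Mathlib

open RealInnerProductSpace in
lemma key_identity_74 {E : Type*} [NormedAddCommGroup E] [InnerProductSpace ℝ E]
    (a b c : ℝ) (hsum : a + b + c = 1) (x y z p : E) :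
    ‖a • x + b • y + c • z - p‖ ^ 2 =
      a * ‖x - p‖ ^ 2 + b * ‖y - p‖ ^ 2 + c * ‖z - p‖ ^ 2 -
        (a * b * ‖x - y‖ ^ 2 + a * c * ‖x - z‖ ^ 2 + b * c * ‖y - z‖ ^ 2) := by
  have h : a • x + b • y + c • z - p = a • (x - p) + b • (y - p) + c • (z - p) := by
    have : p = a • p + b • p + c • p := by
      rw [← add_smul, ← add_smul, hsum, one_smul]
    rw [smul_sub, smul_sub, smul_sub]
    nth_rewrite 1 [this]
    abel
  rw [h]
  set u := x - p
  set v := y - p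
  set w := z - p
  have hxy : x - y = u - v := by simp [u, v]
  have hxz : x - z = u - w := by simp [u, w]
  have hyz : y - z = v - w := by simp [v, w]
  rw [hxy, hxz, hyz]
  simp only [← real_inner_self_eq_norm_sq]
  simp only [inner_add_left, inner_add_right, inner_sub_left, inner_sub_right,
    real_inner_smul_left, real_inner_smul_right, real_inner_comm v u, real_inner_comm w u,
    real_inner_comm w v]
  linear_combination (a * (inner ℝ u u : ℝ) + b * (inner ℝ v v : ℝ) + c * (inner ℝ w w : ℝ)) * hsum

lemma le_of_sq_le_sq_74 {p q : ℝ} (hp : 0 ≤ p) (hq : 0 ≤ q) (h : p ^ 2 ≤ q ^ 2) :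
    p ≤ q := by nlinarith

noncomputable section

/-- Lemma 7.4: let `x,y,z,w ∈ ℝ²` be four distinct points with `w ∈ conv{x,y,z}`, and let
`x',y',z',w'` realize the distances `xz`, `zy`, `xw`, `wy`. If `‖z'−w'‖ ≤ ‖z−w‖`, then
`‖x'−y'‖ ≤ ‖x−y‖`. -/
theorem larger_larger
    (x y z w x' y' z' w' : EuclideanSpace ℝ (Fin 2))
    (hxy : x ≠ y) (hxz : x ≠ z) (hxw : x ≠ w)
    (hyz : y ≠ z) (hyw : y ≠ w) (hzw : z ≠ w)
    (hw : w ∈ convexHull ℝ ({x, y, z} : Set (EuclideanSpace ℝ (Fin 2))))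
    (h1 : dist x' z' = dist x z) (h2 : dist z' y' = dist z y)
    (h3 : dist x' w' = dist x w) (h4 : dist w' y' = dist w y)
    (h5 : dist z' w' ≤ dist z w) :
    dist x' y' ≤ dist x y := by
  -- extract convex combination w = α•x + β•y + γ•z
  obtain ⟨α, β, γ, hα, hβ, hγ, hsum, hwcomb⟩ :
      ∃ α β γ : ℝ, 0 ≤ α ∧ 0 ≤ β ∧ 0 ≤ γ ∧ α + β + γ = 1 ∧
        w = α • x + β • y + γ • z := by
    rw [show ({x, y, z} : Set (EuclideanSpace ℝ (Fin 2))) = insert x {y, z} from rfl,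
      convexHull_insert ⟨y, by simp⟩, mem_convexJoin] at hw
    obtain ⟨a, ha, u, hu, hwseg⟩ := hw
    rw [Set.mem_singleton_iff] at ha
    rw [ha] at hwseg
    rw [convexHull_pair] at hu
    obtain ⟨s, s', hs, hs', hss, rfl⟩ := hu
    obtain ⟨t, t', ht, ht', htt, hwc⟩ := hwseg
    refine ⟨t, t' * s, t' * s', ht, mul_nonneg ht' hs, mul_nonneg ht' hs', by nlinarith, ?_⟩
    rw [← hwc, smul_add, smul_smul, smul_smul, add_assoc]
  -- convert everything to norms
  simp only [dist_eq_norm] at h1 h2 h3 h4 h5 ⊢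
  have e2 : ‖y' - z'‖ = ‖y - z‖ := by rw [norm_sub_rev, norm_sub_rev y]; exact h2
  have e4 : ‖y' - w'‖ = ‖y - w‖ := by rw [norm_sub_rev, norm_sub_rev y]; exact h4
  by_cases hα0 : α = 0
  · -- Case α = 0 : w lies on segment [y, z]
    subst hα0
    rw [zero_smul, zero_add] at hwcomb
    rw [zero_add] at hsum
    have hβpos : 0 < β := by
      rcases hβ.lt_or_eq with h | h
      · exact h
      · exfalso; apply hzw
        rw [hwcomb, ← h, zero_smul, zero_add, show γ = 1 by linarith, one_smul]
    have hγpos : 0 < γ := by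
      rcases hγ.lt_or_eq with h | h
      · exact h
      · exfalso; apply hyw
        rw [hwcomb, ← h, zero_smul, add_zero, show β = 1 by linarith, one_smul]
    have hγval : γ = 1 - β := by linarith
    subst hγval
    have hzw' : z - w = β • (z - y) := by rw [hwcomb]; module
    have hwy' : w - y = (1 - β) • (z - y) := by rw [hwcomb]; module
    have hn1 : ‖z - w‖ = β * ‖z - y‖ := by
      rw [hzw', norm_smul, Real.norm_eq_abs, abs_of_pos hβpos]
    have hn2 : ‖w - y‖ = (1 - β) * ‖z - y‖ := by
      rw [hwy', norm_smul, Real.norm_eq_abs, abs_of_pos hγpos]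
    have hsumd : ‖z - w‖ + ‖w - y‖ = ‖z - y‖ := by rw [hn1, hn2]; ring
    have htri : ‖z' - y'‖ ≤ ‖z' - w'‖ + ‖w' - y'‖ := norm_sub_le_norm_sub_add_norm_sub _ _ _
    have heq2 : ‖z' - w'‖ + ‖w' - y'‖ = ‖z' - y'‖ := by linarith
    have heq1 : ‖z' - w'‖ = ‖z - w‖ := by linarith
    have hbtw : Wbtw ℝ z' w' y' := by
      rw [← dist_add_dist_eq_iff]
      simpa only [dist_eq_norm] using heq2
    obtain ⟨r, hr01, hrmap⟩ := hbtw
    have hdzy : ‖z - y‖ ≠ 0 := by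
      simp only [ne_eq, norm_eq_zero, sub_eq_zero]
      intro h; exact hyz h.symm
    have hrdist : ‖w' - z'‖ = r * ‖z' - y'‖ := by
      rw [← hrmap, ← dist_eq_norm, ← dist_eq_norm, dist_lineMap_left, Real.norm_eq_abs,
        abs_of_nonneg hr01.1]
    have hrval : r = β := by
      rw [norm_sub_rev w', heq1, hn1, h2] at hrdist
      exact (mul_right_cancel₀ hdzy hrdist).symm
    have hw'comb : w' = (0 : ℝ) • x' + β • y' + (1 - β) • z' := by
      rw [← hrmap, hrval, AffineMap.lineMap_apply]
      simp only [vsub_eq_sub, vadd_eq_add]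
      module
    have kp := key_identity_74 0 β (1 - β) (by ring) x' y' z' x'
    rw [← hw'comb] at kp
    have ku := key_identity_74 0 β (1 - β) (by ring) x y z x
    have hwcomb0 : (0 : ℝ) • x + β • y + (1 - β) • z = w := by rw [hwcomb]; module
    rw [hwcomb0] at ku
    have r1 : ‖y' - x'‖ = ‖x' - y'‖ := norm_sub_rev _ _
    have r2 : ‖y - x‖ = ‖x - y‖ := norm_sub_rev _ _
    have r3 : ‖w' - x'‖ = ‖x - w‖ := by rw [norm_sub_rev]; exact h3
    have r4 : ‖w - x‖ = ‖x - w‖ := norm_sub_rev _ _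
    have r5 : ‖z' - x'‖ = ‖z - x‖ := by rw [norm_sub_rev, norm_sub_rev z]; exact h1
    rw [r1, r3, e2, r5] at kp
    rw [r2, r4] at ku
    have hkey : β * ‖x' - y'‖ ^ 2 = β * ‖x - y‖ ^ 2 := by linear_combination ku - kp
    refine le_of_sq_le_sq_74 (norm_nonneg _) (norm_nonneg _) ?_
    exact le_of_eq (mul_left_cancel₀ (ne_of_gt hβpos) hkey)
  · by_cases hβ0 : β = 0
    · -- Case β = 0 : w lies on segment [x, z]
      subst hβ0
      have hαpos : 0 < α := lt_of_le_of_ne hα (Ne.symm hα0)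
      have hγpos : 0 < γ := by
        rcases hγ.lt_or_eq with h | h
        · exact h
        · exfalso; apply hxw
          rw [hwcomb, ← h, zero_smul, add_zero, zero_smul, add_zero,
            show α = 1 by linarith, one_smul]
      have hγval : γ = 1 - α := by linarith
      subst hγval
      have hxw' : x - w = (1 - α) • (x - z) := by rw [hwcomb]; module
      have hwz' : w - z = α • (x - z) := by rw [hwcomb]; module
      have hn1 : ‖x - w‖ = (1 - α) * ‖x - z‖ := by
        rw [hxw', norm_smul, Real.norm_eq_abs, abs_of_pos hγpos]
      have hn2 : ‖w - z‖ = α * ‖x - z‖ := by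
        rw [hwz', norm_smul, Real.norm_eq_abs, abs_of_pos hαpos]
      have hsumd : ‖x - w‖ + ‖w - z‖ = ‖x - z‖ := by rw [hn1, hn2]; ring
      have h5' : ‖w' - z'‖ ≤ ‖w - z‖ := by
        rw [norm_sub_rev, norm_sub_rev w]; exact h5
      have htri : ‖x' - z'‖ ≤ ‖x' - w'‖ + ‖w' - z'‖ :=
        norm_sub_le_norm_sub_add_norm_sub _ _ _
      have heq2 : ‖x' - w'‖ + ‖w' - z'‖ = ‖x' - z'‖ := by linarith
      have hbtw : Wbtw ℝ x' w' z' := by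
        rw [← dist_add_dist_eq_iff]
        simpa only [dist_eq_norm] using heq2
      obtain ⟨r, hr01, hrmap⟩ := hbtw
      have hdxz : ‖x - z‖ ≠ 0 := by
        simp only [ne_eq, norm_eq_zero, sub_eq_zero]
        exact hxz
      have hrdist : ‖w' - x'‖ = r * ‖x' - z'‖ := by
        rw [← hrmap, ← dist_eq_norm, ← dist_eq_norm, dist_lineMap_left, Real.norm_eq_abs,
          abs_of_nonneg hr01.1]
      have hrval : r = 1 - α := by
        rw [norm_sub_rev w', h3, hn1, h1] at hrdist
        exact (mul_right_cancel₀ hdxz hrdist).symm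
      have hw'comb : w' = α • x' + (0 : ℝ) • y' + (1 - α) • z' := by
        rw [← hrmap, hrval, AffineMap.lineMap_apply]
        simp only [vsub_eq_sub, vadd_eq_add]
        module
      have kp := key_identity_74 α 0 (1 - α) (by ring) x' y' z' y'
      rw [← hw'comb] at kp
      have ku := key_identity_74 α 0 (1 - α) (by ring) x y z y
      have hwcomb0 : α • x + (0 : ℝ) • y + (1 - α) • z = w := by rw [hwcomb]
      rw [hwcomb0] at ku
      rw [h4, h2, h1] at kp
      have hkey : α * ‖x' - y'‖ ^ 2 = α * ‖x - y‖ ^ 2 := by linear_combination ku - kp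
      refine le_of_sq_le_sq_74 (norm_nonneg _) (norm_nonneg _) ?_
      exact le_of_eq (mul_left_cancel₀ (ne_of_gt hαpos) hkey)
    · -- Main case : α > 0 and β > 0
      have hαpos : 0 < α := lt_of_le_of_ne hα (Ne.symm hα0)
      have hβpos : 0 < β := lt_of_le_of_ne hβ (Ne.symm hβ0)
      have k1 := key_identity_74 α β γ hsum x y z w
      rw [← hwcomb, sub_self, norm_zero] at k1
      have k2 := key_identity_74 α β γ hsum x' y' z' w'
      rw [h3, e4, h1, e2] at k2
      have knn : (0 : ℝ) ≤ ‖α • x' + β • y' + γ • z' - w'‖ ^ 2 := sq_nonneg _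
      rw [k2] at knn
      have hzwsq : ‖z' - w'‖ ^ 2 ≤ ‖z - w‖ ^ 2 :=
        pow_le_pow_left₀ (norm_nonneg _) h5 2
      have t1 : γ * ‖z' - w'‖ ^ 2 ≤ γ * ‖z - w‖ ^ 2 :=
        mul_le_mul_of_nonneg_left hzwsq hγ
      have hkey : α * β * ‖x' - y'‖ ^ 2 ≤ α * β * ‖x - y‖ ^ 2 := by
        set A := ‖x - w‖ ^ 2
        set B := ‖y - w‖ ^ 2
        set C := ‖z - w‖ ^ 2
        set C' := ‖z' - w'‖ ^ 2
        set D := ‖x - z‖ ^ 2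
        set E := ‖y - z‖ ^ 2
        set P := ‖x' - y'‖ ^ 2
        set Q := ‖x - y‖ ^ 2
        linarith [k1, knn, t1]
      refine le_of_sq_le_sq_74 (norm_nonneg _) (norm_nonneg _) ?_
      exact le_of_mul_le_mul_left (by linarith [hkey]) (mul_pos hαpos hβpos)
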